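/- Pipeline capacity is at least the disconnection cost: let S be a finite type, f₁, …, f_ℓ : S → S → ℕ∞ (ℓ ≥ 1) a pipeline, each f_i taking values only in {0, 1, ⊤}, let s ∈ S, F ⊆ S and n ∈ ℕ. If every index set I ⊆ {1,…,ℓ} that disconnects {s} from F satisfies |I| ≥ n, then there exist a finite set X of cardinality n and functions w₀, w₁, …, w_ℓ : X → S such that w₀ x = s for all x ∈ X, for every i ∈ {1,…,ℓ} and all s', t' ∈ S the number of x ∈ X with w_{i-1} x = s' and w_i x = t' is at most f_i s' t' (as an element of ℕ∞), and w_ℓ x ∈ F for all x ∈ X. -/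

import Mathlib

open Finset
namespace CapProofAux
set_option linter.unusedSectionVars false

variable {S : Type*} [Fintype S] [DecidableEq S]

def Oc (g : ℕ → S → S → ℕ) (i : ℕ) (u : S) : ℕ := ∑ v, g i u v
def Ic (g : ℕ → S → S → ℕ) (i : ℕ) (v : S) : ℕ := ∑ u, g i u v

structure IsQuasi (c : ℕ → S → S → ℕ∞) (ℓ : ℕ) (s : S) (F : Set S) (m : ℕ)
    (p : ℕ × S) (g : ℕ → S → S → ℕ) : Prop where
  cap : ∀ i u v, (g i u v : ℕ∞) ≤ c i u v
  hp1 : p.1 ≤ ℓ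
  hp0 : p.1 = 0 → p.2 = s
  srcS : Oc g 0 s + (if p = (0, s) then 1 else 0) = m
  srcO : ∀ u, u ≠ s → Oc g 0 u = 0
  cons : ∀ i v, i + 1 < ℓ → Ic g i v = Oc g (i+1) v + (if p = (i+1, v) then 1 else 0)
  snk : ∀ v, v ∉ F → Ic g (ℓ-1) v = (if p = (ℓ, v) then 1 else 0)

def resRel (c : ℕ → S → S → ℕ∞) (g : ℕ → S → S → ℕ) : ℕ × S → ℕ × S → Prop :=
  fun p q => (q.1 = p.1 + 1 ∧ (g p.1 p.2 q.2 : ℕ∞) < c p.1 p.2 q.2)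
    ∨ (p.1 = q.1 + 1 ∧ g q.1 q.2 p.2 ≠ 0)

def bump (g : ℕ → S → S → ℕ) (j : ℕ) (a b : S) : ℕ → S → S → ℕ :=
  fun i u v => g i u v + (if i = j ∧ u = a ∧ v = b then 1 else 0)

def drop (g : ℕ → S → S → ℕ) (j : ℕ) (a b : S) : ℕ → S → S → ℕ :=
  fun i u v => g i u v - (if i = j ∧ u = a ∧ v = b then 1 else 0)

lemma bump_drop (g : ℕ → S → S → ℕ) (j : ℕ) (a b : S) (h : g j a b ≠ 0) :
    bump (drop g j a b) j a b = g := by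
  funext i u v
  by_cases hc : i = j ∧ u = a ∧ v = b
  · obtain ⟨h1, h2, h3⟩ := hc
    subst h1; subst h2; subst h3
    simp [bump, drop]
    omega
  · simp [bump, drop, hc]

lemma drop_le (g : ℕ → S → S → ℕ) (j : ℕ) (a b : S) (i : ℕ) (u v : S) :
    drop g j a b i u v ≤ g i u v := Nat.sub_le _ _

lemma Oc_bump (g : ℕ → S → S → ℕ) (j : ℕ) (a b : S) (i : ℕ) (u : S) :
    Oc (bump g j a b) i u = Oc g i u + (if i = j ∧ u = a then 1 else 0) := by
  unfold Oc bump
  rw [Finset.sum_add_distrib]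
  congr 1
  by_cases hc : i = j ∧ u = a
  · simp [hc]
  · rw [if_neg hc, Finset.sum_eq_zero]
    intro v _
    rw [if_neg]
    tauto

lemma Ic_bump (g : ℕ → S → S → ℕ) (j : ℕ) (a b : S) (i : ℕ) (v : S) :
    Ic (bump g j a b) i v = Ic g i v + (if i = j ∧ v = b then 1 else 0) := by
  unfold Ic bump
  rw [Finset.sum_add_distrib]
  congr 1
  by_cases hc : i = j ∧ v = b
  · obtain ⟨h1, h2⟩ := hc; subst h1; subst h2
    rw [if_pos ⟨rfl, rfl⟩, Finset.sum_eq_single a]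
    · simp
    · intro u _ hu; rw [if_neg]; tauto
    · simp
  · rw [if_neg hc, Finset.sum_eq_zero]
    intro u _
    rw [if_neg]
    tauto

lemma bump_cases (g : ℕ → S → S → ℕ) (j : ℕ) (a b : S) (i : ℕ) (u v : S) :
    bump g j a b i u v = g i u v ∨
      ((i,u,v) = (j,a,b) ∧ bump g j a b i u v = g i u v + 1) := by
  by_cases hc : i = j ∧ u = a ∧ v = b
  · right
    obtain ⟨h1,h2,h3⟩ := hc; subst h1; subst h2; subst h3
    simp [bump]
  · left; simp [bump, hc]

lemma ind_congr {c1 c2 : Prop} [Decidable c1] [Decidable c2] (h : c1 ↔ c2) :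
    (if c1 then (1:ℕ) else 0) = if c2 then 1 else 0 := if_congr h rfl rfl

lemma le_Oc (g : ℕ → S → S → ℕ) (i : ℕ) (u v : S) : g i u v ≤ Oc g i u :=
  Finset.single_le_sum (fun w _ => Nat.zero_le _) (mem_univ v)

lemma step {c : ℕ → S → S → ℕ∞} {ℓ : ℕ} {s : S} {F : Set S} {m : ℕ} {p q : ℕ × S}
    {g : ℕ → S → S → ℕ} (hℓ : 1 ≤ ℓ)
    (hc : ∀ i u v, ℓ ≤ i → c i u v = 0)
    (hq : IsQuasi c ℓ s F m p g) (hr : resRel c g p q) :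
    ∃ g', IsQuasi c ℓ s F m q g' ∧
      ∀ j u v, g' j u v ≠ g j u v →
        (((j,u) = p ∨ (j,u) = q) ∧ (((j+1:ℕ),v) = p ∨ ((j+1:ℕ),v) = q)) := by
  obtain ⟨j0, a⟩ := p
  obtain ⟨j1, b⟩ := q
  rcases hr with ⟨hj, hlt⟩ | ⟨hj, hpos⟩
  · -- forward step along edge (j0, a, b), j1 = j0 + 1
    simp only at hj hlt
    subst hj
    have hjl : j0 < ℓ := by
      by_contra hle
      rw [hc _ _ _ (le_of_not_gt hle)] at hlt
      simp at hlt
    have hp0 := hq.hp0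
    simp only at hp0
    refine ⟨bump g j0 a b, ⟨?_, ?_, ?_, ?_, ?_, ?_, ?_⟩, ?_⟩
    · -- cap
      intro i u v
      rcases bump_cases g j0 a b i u v with he | ⟨htr, he⟩
      · rw [he]; exact hq.cap i u v
      · rw [he]
        have h1 := (Prod.ext_iff.mp htr).1
        have h23 := Prod.ext_iff.mp (Prod.ext_iff.mp htr).2
        simp only at h1 h23
        obtain ⟨h2, h3⟩ := h23
        subst h1; subst h2; subst h3
        push_cast
        exact (ENat.add_one_le_iff (ENat.coe_ne_top _)).mpr hlt
    · exact hjl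
    · intro h; exact absurd h (Nat.succ_ne_zero j0)
    · -- srcS
      have hold := hq.srcS
      rw [if_neg (by simp), Oc_bump]
      by_cases hj0 : j0 = 0
      · subst hj0
        have ha : a = s := hp0 rfl
        subst ha
        rw [if_pos rfl] at hold
        rw [if_pos ⟨rfl, rfl⟩]
        omega
      · rw [if_neg (fun h => hj0 (Prod.ext_iff.mp h).1)] at hold
        rw [if_neg (fun h => hj0 h.1.symm)]
        omega
    · -- srcO
      intro u hu
      rw [Oc_bump, if_neg, hq.srcO u hu]
      intro h
      exact hu (h.2.trans (hp0 h.1.symm))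
    · -- cons
      intro i v hi
      have hold := hq.cons i v hi
      rw [Ic_bump, Oc_bump]
      have e1 : (if ((j0+1:ℕ), b) = ((i+1:ℕ), v) then (1:ℕ) else 0)
          = if i = j0 ∧ v = b then 1 else 0 :=
        ind_congr ⟨fun h => by injection h with h1 h2; exact ⟨by omega, h2.symm⟩,
          fun h => by rw [h.1, h.2]⟩
      have e2 : (if ((j0:ℕ), a) = ((i+1:ℕ), v) then (1:ℕ) else 0)
          = if i + 1 = j0 ∧ v = a then 1 else 0 :=
        ind_congr ⟨fun h => by injection h with h1 h2; exact ⟨h1.symm, h2.symm⟩,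
          fun h => by rw [← h.1, ← h.2]⟩
      rw [e2] at hold
      rw [e1]
      omega
    · -- snk
      intro v hv
      have hold := hq.snk v hv
      rw [Ic_bump]
      rw [if_neg (fun h => by injection h with h1 h2; omega)] at hold
      have e1 : (if ((j0+1:ℕ), b) = ((ℓ:ℕ), v) then (1:ℕ) else 0)
          = if ℓ - 1 = j0 ∧ v = b then 1 else 0 :=
        ind_congr ⟨fun h => by injection h with h1 h2; exact ⟨by omega, h2.symm⟩,
          fun h => by
            have h1 : j0 + 1 = ℓ := by omega
            rw [← h1, h.2]⟩
      rw [e1]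
      omega
    · -- diff
      intro j u v hne
      have : (j, u, v) = (j0, a, b) := by
        by_contra hne2
        apply hne
        simp only [bump]
        rw [if_neg, Nat.add_zero]
        intro ⟨x1, x2, x3⟩
        exact hne2 (by rw [x1, x2, x3])
      have h1 := (Prod.ext_iff.mp this).1
      have h23 := Prod.ext_iff.mp (Prod.ext_iff.mp this).2
      simp only at h1 h23
      obtain ⟨h2, h3⟩ := h23
      subst h1; subst h2; subst h3
      exact ⟨Or.inl rfl, Or.inr rfl⟩
  · -- backward step along edge (j1, b, a), j0 = j1 + 1
    simp only at hj hpos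
    subst hj
    have hp1 := hq.hp1
    simp only at hp1
    have hjl : j1 < ℓ := by omega
    have hq0 : j1 = 0 → b = s := by
      intro hz
      subst hz
      by_contra hbs
      have h0 := hq.srcO b hbs
      have := le_Oc g 0 b a
      omega
    have heq : bump (drop g j1 b a) j1 b a = g := bump_drop g j1 b a hpos
    set g' := drop g j1 b a with hg'
    have hOc : ∀ i u, Oc g i u = Oc g' i u + (if i = j1 ∧ u = b then 1 else 0) := by
      intro i u
      conv_lhs => rw [← heq]
      exact Oc_bump g' j1 b a i u
    have hIc : ∀ i v, Ic g i v = Ic g' i v + (if i = j1 ∧ v = a then 1 else 0) := by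
      intro i v
      conv_lhs => rw [← heq]
      exact Ic_bump g' j1 b a i v
    refine ⟨g', ⟨?_, ?_, ?_, ?_, ?_, ?_, ?_⟩, ?_⟩
    · intro i u v
      exact le_trans (by exact_mod_cast Nat.cast_le.mpr (drop_le g j1 b a i u v)) (hq.cap i u v)
    · exact hjl.le
    · exact hq0
    · -- srcS
      have hold := hq.srcS
      rw [if_neg (fun h => Nat.succ_ne_zero j1 (Prod.ext_iff.mp h).1)] at hold
      rw [hOc 0 s] at hold
      by_cases hz : j1 = 0
      · subst hz
        have hb : b = s := hq0 rfl
        subst hb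
        rw [if_pos ⟨rfl, rfl⟩] at hold
        rw [if_pos rfl]
        omega
      · rw [if_neg (fun h => hz h.1.symm)] at hold
        rw [if_neg (fun h => hz (Prod.ext_iff.mp h).1)]
        omega
    · -- srcO
      intro u hu
      have h0 := hq.srcO u hu
      rw [hOc 0 u] at h0
      omega
    · -- cons
      intro i v hi
      have hold := hq.cons i v hi
      rw [hIc i v, hOc (i+1) v] at hold
      have e3 : (if ((j1+1:ℕ), a) = ((i+1:ℕ), v) then (1:ℕ) else 0)
          = if i = j1 ∧ v = a then 1 else 0 :=
        ind_congr ⟨fun h => by injection h with h1 h2; exact ⟨by omega, h2.symm⟩,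
          fun h => by rw [h.1, h.2]⟩
      have e4 : (if ((j1:ℕ), b) = ((i+1:ℕ), v) then (1:ℕ) else 0)
          = if i + 1 = j1 ∧ v = b then 1 else 0 :=
        ind_congr ⟨fun h => by injection h with h1 h2; exact ⟨h1.symm, h2.symm⟩,
          fun h => by rw [← h.1, ← h.2]⟩
      rw [e3] at hold
      rw [e4]
      omega
    · -- snk
      intro v hv
      have hold := hq.snk v hv
      rw [hIc (ℓ-1) v] at hold
      rw [if_neg (fun h => by injection h with h1 h2; omega)]
      have e5 : (if ((j1+1:ℕ), a) = ((ℓ:ℕ), v) then (1:ℕ) else 0)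
          = if ℓ - 1 = j1 ∧ v = a then 1 else 0 :=
        ind_congr ⟨fun h => by injection h with h1 h2; exact ⟨by omega, h2.symm⟩,
          fun h => by
            have h1 : j1 + 1 = ℓ := by omega
            rw [← h1, h.2]⟩
      rw [e5] at hold
      omega
    · -- diff
      intro j u v hne
      have : (j, u, v) = (j1, b, a) := by
        by_contra hne2
        apply hne
        simp only [hg', drop]
        rw [if_neg, Nat.sub_zero]
        intro ⟨x1, x2, x3⟩
        exact hne2 (by rw [x1, x2, x3])
      have h1 := (Prod.ext_iff.mp this).1
      have h23 := Prod.ext_iff.mp (Prod.ext_iff.mp this).2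
      simp only at h1 h23
      obtain ⟨h2, h3⟩ := h23
      subst h1; subst h2; subst h3
      exact ⟨Or.inr rfl, Or.inl rfl⟩



lemma chain_transfer {α : Type*} {r r' : α → α → Prop} :
    ∀ (L : List α) (q : α), List.Chain r q L → (q :: L).Nodup →
      (∀ x y, x ∈ q :: L → y ∈ q :: L → x ≠ y → r x y → r' x y) →
      List.Chain r' q L := by
  intro L
  induction L with
  | nil => intro q _ _ _; exact List.Chain.nil
  | cons b L ih =>
    intro q hch hnd h
    obtain ⟨hqb, hch'⟩ := List.chain_cons.mp hch
    refine List.chain_cons.mpr ⟨?_, ?_⟩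
    · apply h q b (by simp) (by simp) _ hqb
      intro he
      have := (List.nodup_cons.mp hnd).1
      rw [he] at this
      exact this (by simp)
    · exact ih b hch' (List.nodup_cons.mp hnd).2
        (fun x y hx hy => h x y (by simp [hx]) (by simp [hy]))

lemma res_transfer {c : ℕ → S → S → ℕ∞} {g g' : ℕ → S → S → ℕ} {p₀ q₀ x y : ℕ × S}
    (hdiff : ∀ j u v, g' j u v ≠ g j u v →
      (((j,u) = p₀ ∨ (j,u) = q₀) ∧ (((j+1:ℕ),v) = p₀ ∨ ((j+1:ℕ),v) = q₀)))
    (hx : x ≠ p₀) (hy : y ≠ p₀) (hxy : x ≠ y) (hr : resRel c g x y) :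
    resRel c g' x y := by
  rcases hr with ⟨h1, h2⟩ | ⟨h1, h2⟩
  · left
    refine ⟨h1, ?_⟩
    have he : g' x.1 x.2 y.2 = g x.1 x.2 y.2 := by
      by_contra hne
      have hfst := (hdiff _ _ _ hne).1
      have hsnd := (hdiff _ _ _ hne).2
      rw [Prod.mk.eta] at hfst
      rw [← h1, Prod.mk.eta] at hsnd
      rcases hfst with hh | hh
      · exact hx hh
      · rcases hsnd with hh2 | hh2
        · exact hy hh2
        · exact hxy (hh.trans hh2.symm)
    rw [he]
    exact h2
  · right
    refine ⟨h1, ?_⟩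
    have he : g' y.1 y.2 x.2 = g y.1 y.2 x.2 := by
      by_contra hne
      have hfst := (hdiff _ _ _ hne).1
      have hsnd := (hdiff _ _ _ hne).2
      rw [Prod.mk.eta] at hfst
      rw [← h1, Prod.mk.eta] at hsnd
      rcases hfst with hh | hh
      · exact hy hh
      · rcases hsnd with hh2 | hh2
        · exact hx hh2
        · exact hxy (hh2.trans hh.symm)
    rw [he]
    exact h2

lemma chain_aug {c : ℕ → S → S → ℕ∞} {ℓ : ℕ} {s : S} {F : Set S} {m : ℕ}
    (hℓ : 1 ≤ ℓ) (hc : ∀ i u v, ℓ ≤ i → c i u v = 0) :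
    ∀ (L : List (ℕ × S)) (p : ℕ × S) (g : ℕ → S → S → ℕ),
      IsQuasi c ℓ s F m p g → List.Chain (resRel c g) p L → (p :: L).Nodup →
      ∃ g', IsQuasi c ℓ s F m ((p :: L).getLast (by simp)) g' := by
  intro L
  induction L with
  | nil => intro p g hq _ _; exact ⟨g, hq⟩
  | cons q L ih =>
    intro p g hq hch hnd
    obtain ⟨hpq, hch'⟩ := List.chain_cons.mp hch
    obtain ⟨g₂, hq₂, hdiff⟩ := step hℓ hc hq hpq
    have hpmem : p ∉ q :: L := (List.nodup_cons.mp hnd).1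
    have hch₂ : List.Chain (resRel c g₂) q L := by
      apply chain_transfer L q hch' (List.nodup_cons.mp hnd).2
      intro x y hx hy hxy hr
      have hxp : x ≠ p := fun he => hpmem (he ▸ hx)
      have hyp : y ≠ p := fun he => hpmem (he ▸ hy)
      exact res_transfer (p₀ := p) (q₀ := q) hdiff hxp hyp hxy hr
    obtain ⟨g', hg'⟩ := ih q g₂ hq₂ hch₂ (List.nodup_cons.mp hnd).2
    refine ⟨g', ?_⟩
    rwa [List.getLast_cons (by simp)]

structure IsFlow (c : ℕ → S → S → ℕ∞) (ℓ : ℕ) (s : S) (F : Set S) (m : ℕ)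
    (g : ℕ → S → S → ℕ) : Prop where
  cap : ∀ i u v, (g i u v : ℕ∞) ≤ c i u v
  srcS : Oc g 0 s = m
  srcO : ∀ u, u ≠ s → Oc g 0 u = 0
  cons : ∀ i v, i + 1 < ℓ → Ic g i v = Oc g (i+1) v
  snk : ∀ v, v ∉ F → Ic g (ℓ-1) v = 0



lemma exists_nodup_chain_aux {α : Type*} {r : α → α → Prop} :
    ∀ (n : ℕ) (L : List α) (p b : α), L.length ≤ n → List.Chain r p L →
      (p :: L).getLast (by simp) = b →
      ∃ L', L' ⊆ L ∧ List.Chain r p L' ∧ (p :: L').getLast (by simp) = b ∧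
        (p :: L').Nodup := by
  intro n
  induction n with
  | zero =>
    intro L p b hlen hch hlast
    rw [List.length_eq_zero_iff.mp (Nat.le_zero.mp hlen)] at hch hlast ⊢
    exact ⟨[], by simp, hch, hlast, by simp⟩
  | succ n ih =>
    intro L p b hlen hch hlast
    by_cases hp : p ∈ L
    · obtain ⟨l1, l2, rfl⟩ := List.append_of_mem hp
      have hch2 : List.Chain r p l2 := by
        have hsuf : (p :: l2) <:+ (p :: (l1 ++ p :: l2)) := by
          have h1 : (p :: l2) <:+ (l1 ++ p :: l2) := List.suffix_append l1 (p :: l2)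
          exact h1.trans (List.suffix_cons p _)
        exact List.IsChain.suffix (show List.IsChain r (p :: (l1 ++ p :: l2)) from hch) hsuf
      have hlast2 : (p :: l2).getLast (by simp) = b := by
        rw [← hlast]
        have h1 : (p :: (l1 ++ p :: l2)) = (p :: l1) ++ (p :: l2) := by simp
        rw [List.getLast_congr _ _ h1, List.getLast_append]
        · simp
        · simp
      have hlen2 : l2.length ≤ n := by
        simp [List.length_append] at hlen
        omega
      obtain ⟨L', hsub, h1, h2, h3⟩ := ih l2 p b hlen2 hch2 hlast2
      exact ⟨L', fun x hx => by simp [hsub hx], h1, h2, h3⟩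
    · cases L with
      | nil => exact ⟨[], by simp, List.Chain.nil, hlast, by simp⟩
      | cons q l2 =>
        obtain ⟨hpq, hch2⟩ := List.chain_cons.mp hch
        have hlast2 : (q :: l2).getLast (by simp) = b := by
          rw [← hlast]
          exact (List.getLast_cons (by simp)).symm
        have hlen2 : l2.length ≤ n := by simp at hlen; omega
        obtain ⟨L', hsub, h1, h2, h3⟩ := ih l2 q b hlen2 hch2 hlast2
        refine ⟨q :: L', ?_, List.chain_cons.mpr ⟨hpq, h1⟩, ?_, ?_⟩
        · intro x hx
          rcases List.mem_cons.mp hx with h | h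
          · simp [h]
          · simp [hsub h]
        · rw [List.getLast_cons (by simp)]
          exact h2
        · refine List.nodup_cons.mpr ⟨?_, h3⟩
          intro hmem
          apply hp
          rcases List.mem_cons.mp hmem with h | h
          · simp [h]
          · simp [hsub h]

lemma exists_nodup_chain {α : Type*} {r : α → α → Prop} {a b : α}
    (h : Relation.ReflTransGen r a b) :
    ∃ L, List.Chain r a L ∧ (a :: L).getLast (by simp) = b ∧ (a :: L).Nodup := by
  obtain ⟨L, hch, hlast⟩ := List.exists_isChain_cons_of_relationReflTransGen h
  obtain ⟨L', _, h1, h2, h3⟩ := exists_nodup_chain_aux L.length L a b le_rfl hch hlast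
  exact ⟨L', h1, h2, h3⟩


lemma flow_to_quasi {c : ℕ → S → S → ℕ∞} {ℓ : ℕ} {s : S} {F : Set S} {m : ℕ}
    {g : ℕ → S → S → ℕ} (hℓ : 1 ≤ ℓ) (hf : IsFlow c ℓ s F m g) :
    IsQuasi c ℓ s F (m+1) (0, s) g := by
  refine ⟨hf.cap, Nat.zero_le ℓ, fun _ => rfl, ?_, hf.srcO, ?_, ?_⟩
  · rw [if_pos rfl, hf.srcS]
  · intro i v hi
    rw [if_neg (fun h => by injection h with h1 h2; omega), Nat.add_zero, hf.cons i v hi]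
  · intro v hv
    rw [if_neg (fun h => by injection h with h1 h2; omega), hf.snk v hv]

lemma quasi_to_flow {c : ℕ → S → S → ℕ∞} {ℓ : ℕ} {s : S} {F : Set S} {m : ℕ}
    {g : ℕ → S → S → ℕ} {t : S} (hℓ : 1 ≤ ℓ) (ht : t ∈ F)
    (hq : IsQuasi c ℓ s F m (ℓ, t) g) :
    IsFlow c ℓ s F m g := by
  refine ⟨hq.cap, ?_, hq.srcO, ?_, ?_⟩
  · have := hq.srcS
    rwa [if_neg (fun h => by injection h with h1 h2; omega), Nat.add_zero] at this
  · intro i v hi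
    have := hq.cons i v hi
    rwa [if_neg (fun h => by injection h with h1 h2; omega), Nat.add_zero] at this
  · intro v hv
    have := hq.snk v hv
    rwa [if_neg (fun h => by injection h with h1 h2; exact hv (h2 ▸ ht))] at this

lemma augment {c : ℕ → S → S → ℕ∞} {ℓ : ℕ} {s : S} {F : Set S} {k : ℕ}
    {g : ℕ → S → S → ℕ} {t : S} (hℓ : 1 ≤ ℓ)
    (hc : ∀ i u v, ℓ ≤ i → c i u v = 0)
    (hf : IsFlow c ℓ s F k g) (ht : t ∈ F)
    (hreach : Relation.ReflTransGen (resRel c g) (0, s) (ℓ, t)) :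
    ∃ g', IsFlow c ℓ s F (k+1) g' := by
  obtain ⟨L, hch, hlast, hnd⟩ := exists_nodup_chain hreach
  obtain ⟨g', hq'⟩ := chain_aug hℓ hc L (0, s) g (flow_to_quasi hℓ hf) hch hnd
  rw [hlast] at hq'
  exact ⟨g', quasi_to_flow hℓ ht hq'⟩

lemma cut_small {c : ℕ → S → S → ℕ∞} {ℓ : ℕ} {s : S} {F : Set S} {k : ℕ}
    {g : ℕ → S → S → ℕ} (hℓ : 1 ≤ ℓ) (hf : IsFlow c ℓ s F k g)
    (hnr : ∀ t ∈ F, ¬ Relation.ReflTransGen (resRel c g) (0, s) (ℓ, t)) :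
    ∃ Iset : Finset ℕ, Iset ⊆ Finset.range ℓ ∧ Iset.card ≤ k ∧
      (∀ w : ℕ → S, w 0 = s → (∀ i, i < ℓ → 1 ≤ c i (w i) (w (i+1))) →
        (∀ i ∈ Iset, c i (w i) (w (i+1)) = ⊤) → w ℓ ∉ F) := by
  classical
  obtain ⟨ℓ', rfl⟩ : ∃ ℓ', ℓ = ℓ' + 1 := ⟨ℓ - 1, by omega⟩
  set A : ℕ → S → Prop := fun i v => Relation.ReflTransGen (resRel c g) (0, s) (i, v)
    with hA
  set Iset : Finset ℕ := (Finset.range (ℓ'+1)).filter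
    (fun i => ∃ u v, A i u ∧ ¬ A (i+1) v ∧ g i u v ≠ 0) with hIset
  have hsub : Iset ⊆ Finset.range (ℓ'+1) := Finset.filter_subset _ _
  -- no backward crossing
  have hback : ∀ i u v, ¬ A i u → A (i+1) v → g i u v = 0 := by
    intro i u v hu hv
    by_contra hg
    exact hu (hv.tail (Or.inr ⟨rfl, hg⟩))
  -- the various layer sums
  set OA : ℕ → ℕ := fun i => ∑ u, if A i u then Oc g i u else 0 with hOA
  set IA : ℕ → ℕ := fun i => ∑ v, if A (i+1) v then Ic g i v else 0 with hIA
  set cross : ℕ → ℕ := fun i => ∑ u, ∑ v, if A i u ∧ ¬ A (i+1) v then g i u v else 0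
    with hcross
  set XA : ℕ → ℕ := fun i => ∑ u, ∑ v, if A i u ∧ A (i+1) v then g i u v else 0 with hXA
  have h1 : ∀ i, cross i + XA i = OA i := by
    intro i
    rw [hcross, hOA, hXA]
    simp only
    rw [← Finset.sum_add_distrib]
    apply Finset.sum_congr rfl
    intro u _
    rw [← Finset.sum_add_distrib]
    by_cases hu : A i u
    · simp only [hu, true_and, if_true]
      rw [Oc]
      apply Finset.sum_congr rfl
      intro v _
      by_cases hv : A (i+1) v <;> simp [hv]
    · simp [hu]
  have h2 : ∀ i, XA i = IA i := by
    intro i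
    rw [hXA, hIA]
    simp only
    rw [Finset.sum_comm]
    apply Finset.sum_congr rfl
    intro v _
    by_cases hv : A (i+1) v
    · simp only [hv, and_true, if_true]
      rw [Ic]
      apply Finset.sum_congr rfl
      intro u _
      by_cases hu : A i u
      · simp [hu]
      · simp [hu, hback i u v hu hv]
    · simp [hv]
  have h3 : ∀ i, i + 1 < ℓ' + 1 → IA i = OA (i+1) := by
    intro i hi
    apply Finset.sum_congr rfl
    intro v _
    by_cases hv : A (i+1) v <;> simp [hv, hf.cons i v hi]
  have h4 : IA ℓ' = 0 := by
    apply Finset.sum_eq_zero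
    intro v _
    by_cases hv : A (ℓ'+1) v
    · have hvF : v ∉ F := fun hvF => hnr v hvF hv
      have := hf.snk v hvF
      simp only [Nat.add_sub_cancel] at this
      simp [hv, this]
    · simp [hv]
  have h5 : OA 0 = k := by
    rw [hOA]
    simp only
    rw [Finset.sum_eq_single s]
    · rw [if_pos Relation.ReflTransGen.refl, hf.srcS]
    · intro u _ hu
      by_cases h : A 0 u <;> simp [h, hf.srcO u hu]
    · simp
  -- telescoping
  have hC : ∑ i ∈ Finset.range (ℓ'+1), OA i
      = ∑ i ∈ Finset.range ℓ', OA (i+1) + OA 0 := by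
    rw [Finset.sum_range_succ' OA ℓ']
  have hD : ∑ i ∈ Finset.range (ℓ'+1), IA i
      = ∑ i ∈ Finset.range ℓ', IA i + IA ℓ' := Finset.sum_range_succ IA ℓ'
  have hE : ∑ i ∈ Finset.range ℓ', IA i = ∑ i ∈ Finset.range ℓ', OA (i+1) := by
    apply Finset.sum_congr rfl
    intro i hi
    exact h3 i (by simpa using Finset.mem_range.mp hi)
  have hAB : ∑ i ∈ Finset.range (ℓ'+1), cross i + ∑ i ∈ Finset.range (ℓ'+1), IA i
      = ∑ i ∈ Finset.range (ℓ'+1), OA i := by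
    rw [← Finset.sum_add_distrib]
    apply Finset.sum_congr rfl
    intro i _
    rw [← h2 i, h1 i]
  have hsum : ∑ i ∈ Finset.range (ℓ'+1), cross i = k := by omega
  have hcard : Iset.card ≤ k := by
    rw [← hsum]
    calc Iset.card = ∑ _ ∈ Iset, 1 := by simp
    _ ≤ ∑ i ∈ Iset, cross i := by
        apply Finset.sum_le_sum
        intro i hi
        obtain ⟨u, v, hu, hv, hg⟩ := (Finset.mem_filter.mp hi).2
        have t1 : (if A i u ∧ ¬ A (i+1) v then g i u v else 0) ≤
            ∑ v', if A i u ∧ ¬ A (i+1) v' then g i u v' else 0 :=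
          Finset.single_le_sum (f := fun v' => if A i u ∧ ¬ A (i+1) v' then g i u v' else 0)
            (fun _ _ => Nat.zero_le _) (Finset.mem_univ v)
        have t2 : (∑ v', if A i u ∧ ¬ A (i+1) v' then g i u v' else 0) ≤ cross i :=
          Finset.single_le_sum (f := fun u' => ∑ v', if A i u' ∧ ¬ A (i+1) v' then g i u' v' else 0)
            (fun _ _ => Nat.zero_le _) (Finset.mem_univ u)
        rw [if_pos ⟨hu, hv⟩] at t1
        omega
    _ ≤ ∑ i ∈ Finset.range (ℓ'+1), cross i :=
        Finset.sum_le_sum_of_subset hsub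
  refine ⟨Iset, hsub, hcard, ?_⟩
  intro w hw0 hge htop
  intro hF
  apply hnr (w (ℓ'+1)) hF
  have hkey : ∀ j, j ≤ ℓ' + 1 → A j (w j) := by
    intro j
    induction j with
    | zero =>
      intro _
      have : w 0 = s := hw0
      rw [hA, this]
    | succ j ih =>
      intro hj
      have hAj : A j (w j) := ih (by omega)
      by_cases hv : A (j+1) (w (j+1))
      · exact hv
      · exfalso
        have hnofwd : ¬ ((g j (w j) (w (j+1)) : ℕ∞) < c j (w j) (w (j+1))) := by
          intro hlt
          exact hv (hAj.tail (Or.inl ⟨rfl, hlt⟩))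
        have hsat : (g j (w j) (w (j+1)) : ℕ∞) = c j (w j) (w (j+1)) :=
          le_antisymm (hf.cap _ _ _) (le_of_not_gt hnofwd)
        by_cases hmem : j ∈ Iset
        · have := htop j hmem
          rw [this] at hsat
          exact ENat.coe_ne_top _ hsat
        · have hg0 : g j (w j) (w (j+1)) = 0 := by
            by_contra hg
            apply hmem
            rw [hIset]
            exact Finset.mem_filter.mpr ⟨Finset.mem_range.mpr (by omega),
              ⟨w j, w (j+1), hAj, hv, hg⟩⟩
          rw [hg0] at hsat
          have := hge j (by omega)
          rw [← hsat] at this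
          simp at this
  exact hkey (ℓ'+1) le_rfl

lemma split_count {α T : Type*} [DecidableEq α] [DecidableEq T] [Fintype T] [Nonempty T]
    (X : Finset α) (m : T → ℕ) (h : X.card = ∑ t, m t) :
    ∃ φ : α → T, ∀ t, (X.filter (fun x => φ x = t)).card = m t := by
  classical
  set tgt : Finset ((_ : T) × ℕ) := Finset.univ.sigma (fun t => Finset.range (m t)) with htgt
  have hcard : X.card = tgt.card := by
    rw [htgt, Finset.card_sigma]
    simpa using h
  set e := Finset.equivOfCardEq hcard with he
  refine ⟨fun x => if hx : x ∈ X then (e ⟨x, hx⟩).1.1 else Classical.arbitrary T, fun t => ?_⟩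
  have hstep : (X.filter fun x => (if hx : x ∈ X then (e ⟨x, hx⟩).1.1
      else Classical.arbitrary T) = t).card = (tgt.filter fun y => y.1 = t).card := by
    apply Finset.card_bij (fun x hx => (e ⟨x, (Finset.mem_filter.mp hx).1⟩).1)
    · intro x hx
      obtain ⟨hx1, hx2⟩ := Finset.mem_filter.mp hx
      refine Finset.mem_filter.mpr ⟨(e ⟨x, hx1⟩).2, ?_⟩
      rw [dif_pos hx1] at hx2
      exact hx2
    · intro x1 hx1 x2 hx2 heq
      have := e.injective (Subtype.ext heq)
      exact congrArg Subtype.val this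
    · intro y hy
      obtain ⟨hy1, hy2⟩ := Finset.mem_filter.mp hy
      refine ⟨(e.symm ⟨y, hy1⟩).1, Finset.mem_filter.mpr ⟨(e.symm ⟨y, hy1⟩).2, ?_⟩, ?_⟩
      · rw [dif_pos (e.symm ⟨y, hy1⟩).2]
        have : e ⟨(e.symm ⟨y, hy1⟩).1, (e.symm ⟨y, hy1⟩).2⟩ = ⟨y, hy1⟩ := by
          rw [show (⟨(e.symm ⟨y, hy1⟩).1, (e.symm ⟨y, hy1⟩).2⟩ :
            {x // x ∈ X}) = e.symm ⟨y, hy1⟩ from rfl]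
          exact e.apply_symm_apply _
        rw [this]
        exact hy2
      · have : e ⟨(e.symm ⟨y, hy1⟩).1, (e.symm ⟨y, hy1⟩).2⟩ = ⟨y, hy1⟩ := by
          rw [show (⟨(e.symm ⟨y, hy1⟩).1, (e.symm ⟨y, hy1⟩).2⟩ :
            {x // x ∈ X}) = e.symm ⟨y, hy1⟩ from rfl]
          exact e.apply_symm_apply _
        rw [this]
  rw [hstep]
  have : tgt.filter (fun y => y.1 = t) = ({t} : Finset T).sigma (fun t' => Finset.range (m t')) := by
    ext ⟨a, b⟩
    simp [htgt, Finset.mem_sigma, and_comm]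
  rw [this, Finset.card_sigma]
  simp

lemma decompose {c : ℕ → S → S → ℕ∞} {ℓ : ℕ} {s : S} {F : Set S} {n : ℕ}
    {g : ℕ → S → S → ℕ} (hℓ : 1 ≤ ℓ) (hf : IsFlow c ℓ s F n g) :
    ∃ w : ℕ → Fin n → S, (∀ x, w 0 x = s) ∧
      (∀ j, j < ℓ → ∀ u v,
        (Finset.univ.filter (fun x => w j x = u ∧ w (j+1) x = v)).card = g j u v) ∧
      (∀ x, w ℓ x ∈ F) := by
  have hne : Nonempty S := ⟨s⟩
  set Inc : ℕ → S → ℕ := fun i v => if i = 0 then (if v = s then n else 0) else Ic g (i-1) v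
    with hInc
  have hIO : ∀ i, i < ℓ → ∀ v, Inc i v = Oc g i v := by
    intro i hi v
    rw [hInc]
    by_cases hi0 : i = 0
    · subst hi0
      by_cases hv : v = s
      · subst hv; simp [hf.srcS]
      · simp [hv, hf.srcO v hv]
    · simp only [hi0, if_false]
      have := hf.cons (i-1) v (by omega)
      rw [this]
      congr 1
      omega
  have main : ∀ i, i ≤ ℓ → ∃ w : ℕ → Fin n → S, (∀ x, w 0 x = s) ∧
      (∀ j, j < i → ∀ u v,
        (Finset.univ.filter (fun x => w j x = u ∧ w (j+1) x = v)).card = g j u v) ∧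
      (∀ v, (Finset.univ.filter (fun x => w i x = v)).card = Inc i v) := by
    intro i
    induction i with
    | zero =>
      intro _
      refine ⟨fun _ _ => s, fun _ => rfl, fun j hj => absurd hj (by omega), fun v => ?_⟩
      show (Finset.univ.filter (fun _x : Fin n => s = v)).card = if v = s then n else 0
      by_cases hv : v = s
      · subst hv
        rw [if_pos rfl, Finset.filter_true_of_mem (fun _ _ => rfl), Finset.card_univ,
          Fintype.card_fin]
      · rw [if_neg hv, Finset.card_eq_zero, Finset.filter_eq_empty_iff]
        exact fun x _ h => hv h.symm
    | succ i ih =>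
      intro hi
      obtain ⟨w, hw0, hwedge, hwcnt⟩ := ih (by omega)
      have hstep : ∀ u : S, ∃ φ : Fin n → S,
          ∀ v, ((Finset.univ.filter (fun x => w i x = u)).filter
            (fun x => φ x = v)).card = g i u v := by
        intro u
        apply split_count
        rw [hwcnt u, hIO i (by omega) u, Oc]
      choose φ hφ using hstep
      set w' : ℕ → Fin n → S := fun j x => if j ≤ i then w j x else φ (w i x) x with hw'
      have ha : ∀ j, j ≤ i → ∀ x, w' j x = w j x := by
        intro j hj x
        rw [hw']
        simp [hj]
      have hb : ∀ x, w' (i+1) x = φ (w i x) x := by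
        intro x
        rw [hw']
        simp
      have hc : ∀ u v, (Finset.univ.filter
          (fun x => w' i x = u ∧ w' (i+1) x = v)).card = g i u v := by
        intro u v
        rw [← hφ u v]
        congr 1
        ext x
        simp only [Finset.mem_filter, Finset.mem_univ, true_and]
        rw [ha i le_rfl x, hb x]
        constructor
        · rintro ⟨h1, h2⟩
          exact ⟨h1, by rw [← h1]; exact h2⟩
        · rintro ⟨h1, h2⟩
          exact ⟨h1, by rw [h1]; exact h2⟩
      refine ⟨w', fun x => by rw [ha 0 (by omega) x]; exact hw0 x, ?_, ?_⟩
      · intro j hj u v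
        by_cases hji : j = i
        · subst hji
          exact hc u v
        · have hj' : j + 1 ≤ i := by omega
          rw [← hwedge j (by omega) u v]
          congr 1
          ext x
          simp only [Finset.mem_filter, Finset.mem_univ, true_and]
          rw [ha j (by omega) x, ha (j+1) hj' x]
      · intro v
        have hcard := Finset.card_eq_sum_card_fiberwise
          (f := fun x : Fin n => w i x) (t := Finset.univ)
          (s := Finset.univ.filter (fun x => w' (i+1) x = v)) (fun x _ => Finset.mem_univ _)
        rw [hcard]
        have : ∀ u : S, ((Finset.univ.filter (fun x => w' (i+1) x = v)).filter
            (fun x => w i x = u)).card = g i u v := by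
          intro u
          rw [← hc u v]
          congr 1
          ext x
          simp only [Finset.mem_filter, Finset.mem_univ, true_and]
          rw [ha i le_rfl x]
          tauto
        rw [Finset.sum_congr rfl (fun u _ => this u)]
        rw [hInc]
        simp only [Nat.succ_ne_zero, if_false, Nat.add_sub_cancel]
        rfl
  obtain ⟨w, hw0, hwedge, hwcnt⟩ := main ℓ le_rfl
  refine ⟨w, hw0, hwedge, ?_⟩
  intro x
  by_contra hxF
  have h0 := hf.snk (w ℓ x) hxF
  have hmem : x ∈ Finset.univ.filter (fun y => w ℓ y = w ℓ x) := by
    simp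
  have hz : Inc ℓ (w ℓ x) = 0 := by
    show (if ℓ = 0 then (if w ℓ x = s then n else 0) else Ic g (ℓ-1) (w ℓ x)) = 0
    rw [if_neg (by omega)]
    exact h0
  have hzero : (Finset.univ.filter (fun y => w ℓ y = w ℓ x)).card = 0 :=
    (hwcnt (w ℓ x)).trans hz
  rw [Finset.card_eq_zero.mp hzero] at hmem
  exact absurd hmem (Finset.notMem_empty x)

end CapProofAux


/-- An index set `I` disconnects `S₀` from `F` in the pipeline `f₁, …, f_ℓ` if there
is no path `s₀ ∈ S₀, s₁, …, s_ℓ ∈ F` with `f_i s_{i-1} s_i ≥ 1` for every `i` and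
`f_i s_{i-1} s_i = ⊤` whenever `i ∈ I`. -/
def Disconnects {S : Type*} {ℓ : ℕ} (f : Fin ℓ → S → S → ℕ∞) (S₀ F : Set S)
    (I : Finset (Fin ℓ)) : Prop :=
  ¬ ∃ w : Fin (ℓ + 1) → S, w 0 ∈ S₀ ∧ w (Fin.last ℓ) ∈ F ∧
      (∀ i : Fin ℓ, 1 ≤ f i (w i.castSucc) (w i.succ)) ∧
      (∀ i ∈ I, f i (w i.castSucc) (w i.succ) = ⊤)

/-- Pipeline capacity is at least the disconnection cost: if every index set
disconnecting `{s}` from `F` has cardinality at least `n`, then `n` tokens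
(indexed by `Fin n`), all starting in `s`, can be carried through the pipeline to
`F` while respecting the flow constraints. -/
theorem capacity_ge_disconnection_cost {S : Type*} [Fintype S] [DecidableEq S]
    {ℓ : ℕ} (hℓ : 1 ≤ ℓ) (f : Fin ℓ → S → S → ℕ∞)
    (hval : ∀ i : Fin ℓ, ∀ s t : S, f i s t = 0 ∨ f i s t = 1 ∨ f i s t = ⊤)
    (s : S) (F : Set S) (n : ℕ)
    (h : ∀ I : Finset (Fin ℓ), Disconnects f {s} F I → n ≤ I.card) :
    ∃ w : Fin (ℓ + 1) → Fin n → S,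
      (∀ x : Fin n, w 0 x = s) ∧
      (∀ i : Fin ℓ, ∀ s' t' : S,
        ((Finset.univ.filter
            (fun x : Fin n => w i.castSucc x = s' ∧ w i.succ x = t')).card : ℕ∞)
          ≤ f i s' t') ∧
      (∀ x : Fin n, w (Fin.last ℓ) x ∈ F) := by
  classical
  set c : ℕ → S → S → ℕ∞ := fun i u v => if h : i < ℓ then f ⟨i, h⟩ u v else 0 with hcdef
  have hc0 : ∀ (i : ℕ) (u v : S), ℓ ≤ i → c i u v = 0 := fun i u v hi => dif_neg (by omega)
  have hcf : ∀ (i : Fin ℓ) (u v : S), c i.val u v = f i u v := by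
    intro i u v
    show (if h : i.val < ℓ then f ⟨i.val, h⟩ u v else 0) = f i u v
    rw [dif_pos i.isLt, Fin.eta]
  have hflow : ∀ k, k ≤ n → ∃ g, CapProofAux.IsFlow c ℓ s F k g := by
    intro k
    induction k with
    | zero =>
      intro _
      refine ⟨fun _ _ _ => 0, ⟨?_, ?_, ?_, ?_, ?_⟩⟩
      · intro i u v; simp
      · simp [CapProofAux.Oc]
      · intro u _; simp [CapProofAux.Oc]
      · intro i v _; simp [CapProofAux.Ic, CapProofAux.Oc]
      · intro v _; simp [CapProofAux.Ic]
    | succ k ih =>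
      intro hk
      obtain ⟨g, hg⟩ := ih (by omega)
      by_cases hre : ∃ t ∈ F, Relation.ReflTransGen (CapProofAux.resRel c g) (0, s) (ℓ, t)
      · obtain ⟨t, ht, hr⟩ := hre
        exact CapProofAux.augment hℓ hc0 hg ht hr
      · exfalso
        push_neg at hre
        obtain ⟨Iset, hsub, hcard, hblock⟩ := CapProofAux.cut_small hℓ hg hre
        have hlt : ∀ m ∈ Iset, m < ℓ := fun m hm => Finset.mem_range.mp (hsub hm)
        set I : Finset (Fin ℓ) := Iset.attachFin hlt with hI
        have hIcard : I.card = Iset.card := Finset.card_attachFin _ _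
        have hdisc : Disconnects f {s} F I := by
          rintro ⟨wp, hw0, hwl, hge, htop⟩
          set w : ℕ → S := fun j => if hj : j < ℓ + 1 then wp ⟨j, hj⟩ else wp 0 with hw
          have hwj : ∀ j (hj : j < ℓ + 1), w j = wp ⟨j, hj⟩ := by
            intro j hj
            rw [hw]
            simp [hj]
          have h1 : w 0 = s := by
            rw [hwj 0 (by omega)]
            have : (⟨0, by omega⟩ : Fin (ℓ+1)) = 0 := by
              apply Fin.ext
              simp
            rw [this]
            exact hw0
          have hcw : ∀ i (hi : i < ℓ),
              c i (w i) (w (i+1)) = f ⟨i, hi⟩ (wp (Fin.castSucc ⟨i, hi⟩))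
                (wp (Fin.succ ⟨i, hi⟩)) := by
            intro i hi
            have e1 : Fin.castSucc (⟨i, hi⟩ : Fin ℓ) = (⟨i, by omega⟩ : Fin (ℓ+1)) := by
              apply Fin.ext
              simp
            have e2 : Fin.succ (⟨i, hi⟩ : Fin ℓ) = (⟨i+1, by omega⟩ : Fin (ℓ+1)) := by
              apply Fin.ext
              simp
            rw [e1, e2, hwj i (by omega), hwj (i+1) (by omega)]
            show (if h : i < ℓ then f ⟨i, h⟩ _ _ else 0) = _
            rw [dif_pos hi]
          have h2 : ∀ i, i < ℓ → 1 ≤ c i (w i) (w (i+1)) := by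
            intro i hi
            rw [hcw i hi]
            exact hge ⟨i, hi⟩
          have h3 : ∀ i ∈ Iset, c i (w i) (w (i+1)) = ⊤ := by
            intro i hi
            have hil : i < ℓ := hlt i hi
            rw [hcw i hil]
            apply htop
            rw [hI, Finset.mem_attachFin]
            exact hi
          have h4 := hblock w h1 h2 h3
          apply h4
          have : (⟨ℓ, by omega⟩ : Fin (ℓ+1)) = Fin.last ℓ := by
            apply Fin.ext
            simp
          rw [hwj ℓ (by omega), this]
          exact hwl
        have := h I hdisc
        omega
  obtain ⟨g, hg⟩ := hflow n le_rfl
  obtain ⟨wN, hw0, hedge, hlast⟩ := CapProofAux.decompose hℓ hg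
  refine ⟨fun j x => wN j.val x, fun x => ?_, fun i s' t' => ?_, fun x => ?_⟩
  · simp only [Fin.val_zero]
    exact hw0 x
  · simp only [Fin.coe_castSucc, Fin.val_succ]
    rw [hedge i.val i.isLt s' t']
    rw [← hcf i s' t']
    exact hg.cap _ _ _
  · simp only [Fin.val_last]
    exact hlast x
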